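/- T restricts to a bijection from Γ₁ ∖ Γ₃ onto Γ₂ ∖ Γ₃, and this restriction satisfies the Belavin–Drinfeld nilpotency condition: for every α ∈ Γ₁ ∖ Γ₃ there exists k ≥ 1 such that T^j(α) ∈ Γ₁ ∖ Γ₃ for all 0 ≤ j < k while T^k(α) ∉ Γ₁ ∖ Γ₃. In other words, (Γ₁ ∖ Γ₃, Γ₂ ∖ Γ₃, T) is an ordinary Belavin–Drinfeld triple. -/
import Mathlib


/-- For a generalized Belavin–Drinfeld triple `(Γ₁, Γ₂, T)`,
the map `T` restricts to a bijection of `Γ₁ \ Γ₃` onto `Γ₂ \ Γ₃` satisfying the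
Belavin–Drinfeld nilpotency condition: every `α ∈ Γ₁ \ Γ₃` eventually leaves
`Γ₁ \ Γ₃` under iteration of `T`. -/
theorem gamma_complement_is_BD_triple
    (Γ : Type*) [Finite Γ] (Γ₁ Γ₂ : Set Γ) (T : Γ → Γ)
    (hT : Set.BijOn T Γ₁ Γ₂)
    (Γ₃ : Set Γ)
    (hΓ₃ : ∀ α, α ∈ Γ₃ ↔ ∃ k, 1 ≤ k ∧ (∀ j < k, T^[j] α ∈ Γ₁) ∧ T^[k] α = α) :
    Set.BijOn T (Γ₁ \ Γ₃) (Γ₂ \ Γ₃) ∧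
    ∀ α ∈ Γ₁ \ Γ₃, ∃ k, 1 ≤ k ∧ (∀ j < k, T^[j] α ∈ Γ₁ \ Γ₃) ∧
      T^[k] α ∉ Γ₁ \ Γ₃ := by
  classical
  -- Γ₃ ⊆ Γ₁
  have hsub : ∀ α, α ∈ Γ₃ → α ∈ Γ₁ := by
    intro α hα
    obtain ⟨k, hk1, hj, _⟩ := (hΓ₃ α).1 hα
    simpa using hj 0 hk1
  -- Γ₃ is forward invariant
  have hfwd : ∀ α, α ∈ Γ₃ → T α ∈ Γ₃ := by
    intro α hα
    obtain ⟨k, hk1, hj, hfix⟩ := (hΓ₃ α).1 hα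
    refine (hΓ₃ (T α)).2 ⟨k, hk1, ?_, ?_⟩
    · intro j hjk
      rw [← Function.iterate_succ_apply]
      simp only [Nat.succ_eq_add_one]
      rcases Nat.lt_or_ge (j + 1) k with h | h
      · exact hj _ h
      · have hjk1 : j + 1 = k := by omega
        rw [hjk1, hfix]
        exact hj 0 hk1
    · rw [← Function.iterate_succ_apply, Function.iterate_succ_apply', hfix]
  -- backwards: α ∈ Γ₁ and T α ∈ Γ₃ implies α ∈ Γ₃
  have hback : ∀ α, α ∈ Γ₁ → T α ∈ Γ₃ → α ∈ Γ₃ := by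
    intro α hα1 hα3
    obtain ⟨k, hk1, hj, hfix⟩ := (hΓ₃ (T α)).1 hα3
    have hiter : ∀ j < k, T^[j] α ∈ Γ₁ := by
      intro j hjk
      rcases Nat.eq_zero_or_pos j with rfl | hj0
      · simpa using hα1
      · obtain ⟨i, rfl⟩ := Nat.exists_eq_add_of_le hj0
        rw [Nat.add_comm, Function.iterate_succ_apply]
        exact hj i (by omega)
    refine (hΓ₃ α).2 ⟨k, hk1, hiter, ?_⟩
    have hmem : T^[k] α ∈ Γ₁ := by
      obtain ⟨i, rfl⟩ := Nat.exists_eq_add_of_le hk1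
      rw [Nat.add_comm, Function.iterate_succ_apply]
      exact hj i (by omega)
    have hTeq : T (T^[k] α) = T α := by
      have h1 : T^[k + 1] α = T α := by
        rw [Function.iterate_succ_apply]; exact hfix
      rw [Function.iterate_succ_apply'] at h1
      exact h1
    exact hT.injOn hmem hα1 hTeq
  -- cancellation lemma
  have cancel : ∀ α, (∀ m, T^[m] α ∈ Γ₁) → ∀ i d, T^[i + d] α = T^[i] α → T^[d] α = α := by
    intro α hall i
    induction i with
    | zero => intro d h; simpa using h
    | succ i ih =>
      intro d h
      apply ih
      have h' : T (T^[i + d] α) = T (T^[i] α) := by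
        have h1 : T^[(i + d) + 1] α = T^[i + 1] α := by
          rw [show (i + d) + 1 = i + 1 + d from by omega]; exact h
        rw [Function.iterate_succ_apply', Function.iterate_succ_apply'] at h1
        exact h1
      exact hT.injOn (hall _) (hall _) h'
  constructor
  · refine ⟨?_, fun a ha b hb h => hT.injOn ha.1 hb.1 h, ?_⟩
    · intro α hα
      refine ⟨hT.mapsTo hα.1, fun h => hα.2 (hback α hα.1 h)⟩
    · intro β hβ
      obtain ⟨α, hα1, rfl⟩ := hT.surjOn hβ.1
      exact ⟨α, ⟨hα1, fun h => hβ.2 (hfwd α h)⟩, rfl⟩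
  · intro α hα
    have hex : ∃ k, 1 ≤ k ∧ T^[k] α ∉ Γ₁ \ Γ₃ := by
      by_contra hcon
      push_neg at hcon
      have hall : ∀ m, T^[m] α ∈ Γ₁ := by
        intro m
        rcases Nat.eq_zero_or_pos m with rfl | hm
        · simpa using hα.1
        · exact (hcon m hm).1
      obtain ⟨i, j, hij, heq⟩ := Finite.exists_ne_map_eq_of_infinite (fun n : ℕ => T^[n] α)
      rcases Nat.lt_or_ge i j with hlt | hge
      · obtain ⟨d, rfl⟩ := Nat.exists_eq_add_of_lt hlt
        have := cancel α hall i (d + 1)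
          (by rw [show i + (d + 1) = i + d + 1 from by omega]; exact heq.symm)
        exact hα.2 ((hΓ₃ α).2 ⟨d + 1, by omega, fun m _ => hall m, this⟩)
      · have hlt : j < i := by omega
        obtain ⟨d, rfl⟩ := Nat.exists_eq_add_of_lt hlt
        have := cancel α hall j (d + 1)
          (by rw [show j + (d + 1) = j + d + 1 from by omega]; exact heq)
        exact hα.2 ((hΓ₃ α).2 ⟨d + 1, by omega, fun m _ => hall m, this⟩)
    refine ⟨Nat.find hex, (Nat.find_spec hex).1, ?_, (Nat.find_spec hex).2⟩
    intro j hj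
    rcases Nat.eq_zero_or_pos j with rfl | hj0
    · simpa using hα
    · by_contra hcon
      exact Nat.find_min hex hj ⟨hj0, hcon⟩
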